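/- arXiv:cs/0202015 — 6 statements merged into one kernel-verified Lean document; each statement's English description precedes it below -/
import Mathlib

section
/- The class of complement-free valuations is closed under the OR operation: if v₁ and v₂ are complement-free valuations on X, then the valuation (v₁∨v₂)(S) = max over subsets T ⊆ S of (v₁(T)+v₂(S∖T)) is complement-free. -/
/-- The OR combination of two valuations:
`(v₁ ∨ v₂)(S) = max over T ⊆ S of v₁(T) + v₂(S∖T)`. -/
noncomputable def orVal {X : Type*} [DecidableEq X]
    (v₁ v₂ : Finset X → ℝ) (S : Finset X) : ℝ :=
  S.powerset.sup' (Finset.powerset_nonempty S) (fun T => v₁ T + v₂ (S \ T))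

/-- Complement-free valuations are closed under OR. -/
theorem complementFree_closed_under_or
    {X : Type*} [DecidableEq X] [Fintype X]
    (v₁ v₂ : Finset X → ℝ)
    (h01 : v₁ ∅ = 0) (h02 : v₂ ∅ = 0)
    (hmono1 : ∀ A B : Finset X, A ⊆ B → v₁ A ≤ v₁ B)
    (hmono2 : ∀ A B : Finset X, A ⊆ B → v₂ A ≤ v₂ B)
    (hnn1 : ∀ A : Finset X, 0 ≤ v₁ A)
    (hnn2 : ∀ A : Finset X, 0 ≤ v₂ A)
    (hcf1 : ∀ A B : Finset X, v₁ (A ∪ B) ≤ v₁ A + v₁ B)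
    (hcf2 : ∀ A B : Finset X, v₂ (A ∪ B) ≤ v₂ A + v₂ B) :
    ∀ A B : Finset X, orVal v₁ v₂ (A ∪ B) ≤ orVal v₁ v₂ A + orVal v₁ v₂ B := by
  intro A B
  apply Finset.sup'_le
  intro T hT
  rw [Finset.mem_powerset] at hT
  have hTA : T \ A ⊆ B := fun x hx => by
    have := Finset.mem_sdiff.mp hx
    rcases Finset.mem_union.mp (hT this.1) with h | h
    · exact absurd h this.2
    · exact h
  have l1 : v₁ (T ∩ A) + v₂ (A \ (T ∩ A)) ≤ orVal v₁ v₂ A :=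
    Finset.le_sup' (fun T => v₁ T + v₂ (A \ T)) (Finset.mem_powerset.mpr Finset.inter_subset_right)
  have l2 : v₁ (T \ A) + v₂ (B \ (T \ A)) ≤ orVal v₁ v₂ B :=
    Finset.le_sup' (fun T => v₁ T + v₂ (B \ T)) (Finset.mem_powerset.mpr hTA)
  have e1 : v₁ T ≤ v₁ (T ∩ A) + v₁ (T \ A) := by
    have : T = (T ∩ A) ∪ (T \ A) := by
      ext x; simp [Finset.mem_union, Finset.mem_inter, Finset.mem_sdiff]; tauto
    calc v₁ T = v₁ ((T ∩ A) ∪ (T \ A)) := by rw [← this]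
    _ ≤ _ := hcf1 _ _
  have e2 : v₂ ((A ∪ B) \ T) ≤ v₂ (A \ (T ∩ A)) + v₂ (B \ (T \ A)) := by
    have : (A ∪ B) \ T ⊆ (A \ T) ∪ (B \ T) := by
      intro x hx
      simp only [Finset.mem_sdiff, Finset.mem_union] at hx ⊢; tauto
    calc v₂ ((A ∪ B) \ T) ≤ v₂ ((A \ T) ∪ (B \ T)) := hmono2 _ _ this
    _ ≤ v₂ (A \ T) + v₂ (B \ T) := hcf2 _ _
    _ ≤ _ := by
        have m1 : A \ T ⊆ A \ (T ∩ A) := by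
          intro x hx; simp only [Finset.mem_sdiff, Finset.mem_inter] at hx ⊢; tauto
        have m2 : B \ T ⊆ B \ (T \ A) := by
          intro x hx; simp only [Finset.mem_sdiff] at hx ⊢; tauto
        exact add_le_add (hmono2 _ _ m1) (hmono2 _ _ m2)
  linarith
end

section
/- Every submodular valuation v on a finite set X can be represented as an XOR of additive valuations: v(S) = max over permutations π of X of Σ_{j : π(j) ∈ S} v(π(j) | {π(1),…,π(j−1)}), where the maximum is attained. In particular, for each set A there is a permutation placing the elements of A first whose associated additive clause gives A the value v(A), and every other clause gives A a value at most v(A). -/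
open Finset

/-- The value given to a set `A` by the additive (OR) clause associated with a
permutation `π` of the items: each item `π j` is priced at its marginal value
given the items preceding it in `π`, and `A` is valued at the sum of the prices
of its elements. -/
noncomputable def permClause {m : ℕ} (v : Finset (Fin m) → ℝ)
    (π : Equiv.Perm (Fin m)) (A : Finset (Fin m)) : ℝ :=
  ∑ j ∈ Finset.univ.filter (fun j => π j ∈ A),
    (v ((Finset.Iic j).image π) - v ((Finset.Iio j).image π))

/-- The image under `π` of the first `n` positions. -/
def Hset {m : ℕ} (π : Equiv.Perm (Fin m)) (n : ℕ) : Finset (Fin m) :=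
  (Finset.univ.filter (fun x : Fin m => x.val < n)).image π

lemma Iio_image {m : ℕ} (π : Equiv.Perm (Fin m)) (j : Fin m) :
    (Finset.Iio j).image π = Hset π j.val := by
  unfold Hset; congr 1; ext x
  simp only [Finset.mem_Iio, Finset.mem_filter, Finset.mem_univ, true_and, Fin.lt_def]

lemma Iic_image {m : ℕ} (π : Equiv.Perm (Fin m)) (j : Fin m) :
    (Finset.Iic j).image π = Hset π (j.val + 1) := by
  unfold Hset; congr 1; ext x
  simp only [Finset.mem_Iic, Finset.mem_filter, Finset.mem_univ, true_and, Fin.le_def,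
    Nat.lt_succ_iff]

lemma Hset_zero {m : ℕ} (π : Equiv.Perm (Fin m)) : Hset π 0 = ∅ := by
  simp [Hset]

lemma Hset_top {m : ℕ} (π : Equiv.Perm (Fin m)) : Hset π m = Finset.univ := by
  unfold Hset
  rw [show (Finset.univ.filter (fun x : Fin m => x.val < m)) = Finset.univ by
    ext x; simp [x.isLt]]
  exact Finset.image_univ_of_surjective π.surjective

lemma Iic_image_insert {m : ℕ} (π : Equiv.Perm (Fin m)) (j : Fin m) :
    (Finset.Iic j).image π = insert (π j) ((Finset.Iio j).image π) := by
  rw [← Finset.Iio_insert, Finset.image_insert]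

lemma pi_not_mem {m : ℕ} (π : Equiv.Perm (Fin m)) (j : Fin m) :
    π j ∉ (Finset.Iio j).image π := by
  simp only [Finset.mem_image]
  rintro ⟨x, hx, he⟩
  have := π.injective he
  subst this
  simp at hx

/-- every submodular valuation is the XOR (pointwise max) of the
additive clauses associated with the permutations of the items: each clause
values every set `A` at most `v(A)`, and some clause (one placing the elements
of `A` first) attains exactly `v(A)`. -/
theorem submodular_is_xos_of_perm_clauses
    {m : ℕ} (v : Finset (Fin m) → ℝ)
    (h0 : v ∅ = 0)
    (hmono : ∀ A B : Finset (Fin m), A ⊆ B → v A ≤ v B)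
    (hnn : ∀ A : Finset (Fin m), 0 ≤ v A)
    (hsub : ∀ A B : Finset (Fin m), v (A ∪ B) + v (A ∩ B) ≤ v A + v B) :
    ∀ A : Finset (Fin m),
      (∀ π : Equiv.Perm (Fin m), permClause v π A ≤ v A) ∧
      (∃ π : Equiv.Perm (Fin m), permClause v π A = v A) := by
  intro A
  -- marginal value lemma
  have marg : ∀ (P : Finset (Fin m)) (x : Fin m), x ∉ P → x ∈ A →
      v (insert x P) - v P ≤ v (insert x P ∩ A) - v (P ∩ A) := by
    intro P x hx hxA
    have h1 : P ∪ insert x (P ∩ A) = insert x P := by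
      ext y
      simp only [Finset.mem_union, Finset.mem_insert, Finset.mem_inter]
      tauto
    have h2 : P ∩ insert x (P ∩ A) = P ∩ A := by
      ext y
      simp only [Finset.mem_inter, Finset.mem_insert]
      constructor
      · rintro ⟨hy, (rfl | ⟨_, h⟩)⟩
        · exact absurd hy hx
        · exact ⟨hy, h⟩
      · exact fun ⟨hy, h⟩ => ⟨hy, Or.inr ⟨hy, h⟩⟩
    have h3 : insert x P ∩ A = insert x (P ∩ A) :=
      Finset.insert_inter_of_mem hxA
    have := hsub P (insert x (P ∩ A))
    rw [h1, h2, h3] at *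
    linarith [hsub P (insert x (P ∩ A))]
  constructor
  · intro π
    have key : ∀ j ∈ Finset.univ.filter (fun j => π j ∈ A),
        v ((Finset.Iic j).image π) - v ((Finset.Iio j).image π) ≤
          v (Hset π (j.val + 1) ∩ A) - v (Hset π j.val ∩ A) := by
      intro j hj
      simp only [Finset.mem_filter] at hj
      rw [← Iic_image, ← Iio_image, Iic_image_insert]
      exact marg _ _ (pi_not_mem π j) hj.2
    calc permClause v π A
        ≤ ∑ j ∈ Finset.univ.filter (fun j => π j ∈ A),
            (v (Hset π (j.val + 1) ∩ A) - v (Hset π j.val ∩ A)) :=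
          Finset.sum_le_sum key
      _ ≤ ∑ j : Fin m, (v (Hset π (j.val + 1) ∩ A) - v (Hset π j.val ∩ A)) := by
          apply Finset.sum_le_sum_of_subset_of_nonneg (Finset.filter_subset _ _)
          intro j _ _
          have : Hset π j.val ∩ A ⊆ Hset π (j.val + 1) ∩ A := by
            apply Finset.inter_subset_inter_right
            refine Finset.image_subset_image ?_
            intro x hx
            simp only [Finset.mem_filter] at *
            exact ⟨hx.1, Nat.lt_succ_of_lt hx.2⟩
          linarith [hmono _ _ this]
      _ = v A := by
          rw [Fin.sum_univ_eq_sum_range (fun i => v (Hset π (i + 1) ∩ A) - v (Hset π i ∩ A)) m]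
          rw [Finset.sum_range_sub (fun n => v (Hset π n ∩ A))]
          rw [Hset_top, Hset_zero]
          simp [h0]
  · -- existence: a permutation placing the elements of A first
    set k := A.card with hkdef
    have hk : k ≤ m := by
      simpa using Finset.card_le_card (Finset.subset_univ A)
    -- the initial segment as a finset
    have hseg : (Finset.univ.filter (fun x : Fin m => x.val < k)) =
        (Finset.range k).attachFin (fun i hi => lt_of_lt_of_le (Finset.mem_range.mp hi) hk) := by
      ext x
      simp [Finset.mem_attachFin]
    have hsegcard : (Finset.univ.filter (fun x : Fin m => x.val < k)).card = k := by
      rw [hseg, Finset.card_attachFin, Finset.card_range]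
    have c1 : Fintype.card {x : Fin m // x.val < k} = k := by
      rw [Fintype.card_subtype]; exact hsegcard
    have c2 : Fintype.card {x : Fin m // x ∈ A} = k := Fintype.card_coe A
    have c1' : Fintype.card {x : Fin m // ¬ x.val < k} = m - k := by
      rw [Fintype.card_subtype_compl, c1, Fintype.card_fin]
    have c2' : Fintype.card {x : Fin m // ¬ x ∈ A} = m - k := by
      rw [Fintype.card_subtype_compl, c2, Fintype.card_fin]
    let e := Fintype.equivOfCardEq (c1.trans c2.symm)
    let f := Fintype.equivOfCardEq (c1'.trans c2'.symm)
    let π : Equiv.Perm (Fin m) := Equiv.subtypeCongr e f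
    have hπ : ∀ x : Fin m, π x ∈ A ↔ x.val < k := by
      intro x
      by_cases h : x.val < k
      · have hx : π x = (e ⟨x, h⟩ : Fin m) := by
          simp only [π, Equiv.subtypeCongr, Equiv.trans_apply]
          rw [Equiv.sumCompl_symm_apply_of_pos (p := fun x : Fin m => x.val < k) h]
          simp
        rw [hx]
        exact iff_of_true (e ⟨x, h⟩).2 h
      · have hx : π x = (f ⟨x, h⟩ : Fin m) := by
          simp only [π, Equiv.subtypeCongr, Equiv.trans_apply]
          rw [Equiv.sumCompl_symm_apply_of_neg (p := fun x : Fin m => x.val < k) h]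
          simp
        rw [hx]
        exact iff_of_false (f ⟨x, h⟩).2 h
    refine ⟨π, ?_⟩
    have hfeq : Finset.univ.filter (fun j => π j ∈ A) =
        Finset.univ.filter (fun j : Fin m => j.val < k) := by
      ext j; simp [hπ j]
    have hHk : Hset π k = A := by
      have hsub' : Hset π k ⊆ A := by
        intro y hy
        simp only [Hset, Finset.mem_image, Finset.mem_filter] at hy
        obtain ⟨x, ⟨_, hx⟩, rfl⟩ := hy
        exact (hπ x).mpr hx
      have hcard : A.card ≤ (Hset π k).card := by
        rw [Hset, Finset.card_image_of_injective _ π.injective, hsegcard]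
      exact Finset.eq_of_subset_of_card_le hsub' hcard
    calc permClause v π A
        = ∑ j ∈ Finset.univ.filter (fun j : Fin m => j.val < k),
            (v (Hset π (j.val + 1)) - v (Hset π j.val)) := by
          rw [permClause, hfeq]
          exact Finset.sum_congr rfl (fun j _ => by rw [Iic_image, Iio_image])
      _ = ∑ j : Fin m, (if j.val < k then v (Hset π (j.val + 1)) - v (Hset π j.val) else 0) :=
          (Finset.sum_filter _ _)
      _ = ∑ i ∈ Finset.range m, (if i < k then v (Hset π (i + 1)) - v (Hset π i) else 0) :=
          Fin.sum_univ_eq_sum_range (fun i => if i < k then v (Hset π (i + 1)) - v (Hset π i) else 0) m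
      _ = ∑ i ∈ Finset.range k, (v (Hset π (i + 1)) - v (Hset π i)) := by
          rw [← Finset.sum_filter]
          congr 1
          ext i
          simp only [Finset.mem_filter, Finset.mem_range]
          constructor
          · exact fun h => h.2
          · exact fun h => ⟨lt_of_lt_of_le h hk, h⟩
      _ = v (Hset π k) - v (Hset π 0) := Finset.sum_range_sub (fun n => v (Hset π n)) k
      _ = v A := by rw [hHk, Hset_zero, h0, sub_zero]
end

section
/- The valuation on three items given by v(S)=2 if |S|=1, v(S)=3 if |S|=2, v(S)=5 if |S|=3 (and v(∅)=0) is complement-free but cannot be expressed as a maximum of finitely many additive clauses (i.e., it is not an XOS valuation). -/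
/-- The valuation on three items with `v(S)=2,3,5` for
`|S|=1,2,3` (and `v(∅)=0`) is complement-free but is not an XOS valuation
(it is not the maximum of finitely many nonnegative additive clauses). -/
theorem cf_not_xos_example
    (v : Finset (Fin 3) → ℝ)
    (hv : ∀ S : Finset (Fin 3),
      v S = if S.card = 1 then 2 else if S.card = 2 then 3 else
            if S.card = 3 then 5 else 0) :
    (∀ A B : Finset (Fin 3), v (A ∪ B) ≤ v A + v B) ∧
    ¬ (∃ (n : ℕ) (p : Fin (n + 1) → Fin 3 → ℝ),
        (∀ k x, 0 ≤ p k x) ∧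
        ∀ S : Finset (Fin 3),
          v S = Finset.univ.sup' Finset.univ_nonempty
            (fun k => ∑ x ∈ S, p k x)) := by
  constructor
  · intro A B
    rw [hv, hv, hv]
    have h1 := Finset.card_union_le A B
    have h2 : A.card ≤ (A ∪ B).card :=
      Finset.card_le_card Finset.subset_union_left
    have h3 : B.card ≤ (A ∪ B).card :=
      Finset.card_le_card Finset.subset_union_right
    have h4 : (A ∪ B).card ≤ 3 := by
      simpa using Finset.card_le_card (A ∪ B).subset_univ
    set a := A.card
    set b := B.card
    set c := (A ∪ B).card
    have ha : a ≤ 3 := le_trans h2 h4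
    have hb : b ≤ 3 := le_trans h3 h4
    interval_cases c <;> interval_cases a <;> interval_cases b <;>
      simp_all <;> norm_num
  · rintro ⟨n, p, hp, hS⟩
    have hU := hS Finset.univ
    rw [hv] at hU
    norm_num at hU
    obtain ⟨k, -, hk⟩ := Finset.exists_mem_eq_sup'
        (Finset.univ_nonempty (α := Fin (n + 1)))
        (fun k => ∑ x ∈ (Finset.univ : Finset (Fin 3)), p k x)
    have hk5 : p k 0 + p k 1 + p k 2 = 5 := by
      rw [hk] at hU
      simpa [Fin.sum_univ_three] using hU.symm
    have hpair : ∀ S : Finset (Fin 3), S.card = 2 →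
        (∑ x ∈ S, p k x) ≤ 3 := by
      intro S hSc
      have h := Finset.le_sup' (fun k => ∑ x ∈ S, p k x)
        (Finset.mem_univ k)
      rw [← hS, hv] at h
      simpa [hSc] using h
    have h01 : p k 0 + p k 1 ≤ 3 := by
      have := hpair {0, 1} (by decide)
      simpa [Finset.sum_pair (show (0 : Fin 3) ≠ 1 by decide)] using this
    have h02 : p k 0 + p k 2 ≤ 3 := by
      have := hpair {0, 2} (by decide)
      simpa [Finset.sum_pair (show (0 : Fin 3) ≠ 2 by decide)] using this
    have h12 : p k 1 + p k 2 ≤ 3 := by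
      have := hpair {1, 2} (by decide)
      simpa [Finset.sum_pair (show (1 : Fin 3) ≠ 2 by decide)] using this
    linarith
end

section
/- Greedy 2-approximation for submodular valuations: given submodular valuations v₁,…,vₙ on a finite set X of m items, the greedy algorithm that processes items in a fixed order, assigning each item x to a bidder j maximizing the current marginal value vⱼ(x | Sⱼ) (where Sⱼ is the set already assigned to j), yields an allocation (S₁,…,Sₙ) with Σⱼ vⱼ(Sⱼ) ≥ (1/2)·max over all partitions (T₁,…,Tₙ) of X of Σⱼ vⱼ(Tⱼ). -/
open Finset

private lemma marg_mono' {m : ℕ} (v : Finset (Fin m) → ℝ)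
    (hmono : ∀ A B, A ⊆ B → v A ≤ v B)
    (hsub : ∀ A B, v (A ∪ B) + v (A ∩ B) ≤ v A + v B)
    {C D : Finset (Fin m)} (hCD : C ⊆ D) (x : Fin m) :
    v (insert x D) - v D ≤ v (insert x C) - v C := by
  by_cases hx : x ∈ D
  · have h1 : insert x D = D := Finset.insert_eq_self.2 hx
    have h2 : v C ≤ v (insert x C) := hmono _ _ (Finset.subset_insert _ _)
    rw [h1]; linarith
  · have h := hsub (insert x C) D
    have hu : insert x C ∪ D = insert x D := by
      rw [Finset.insert_union, Finset.union_eq_right.2 hCD]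
    have hi : insert x C ∩ D = C := by
      ext y
      simp only [Finset.mem_inter, Finset.mem_insert]
      constructor
      · rintro ⟨h1 | h1, h2⟩
        · exact absurd (h1 ▸ h2) hx
        · exact h1
      · intro h1; exact ⟨Or.inr h1, hCD h1⟩
    rw [hu, hi] at h; linarith

private lemma sum_marg' {m : ℕ} (v : Finset (Fin m) → ℝ)
    (hmono : ∀ A B, A ⊆ B → v A ≤ v B)
    (hsub : ∀ A B, v (A ∪ B) + v (A ∩ B) ≤ v A + v B)
    (B A : Finset (Fin m)) :
    v (B ∪ A) ≤ v B + ∑ x ∈ A, (v (insert x B) - v B) := by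
  induction A using Finset.induction with
  | empty => simp
  | @insert a A' ha ih =>
    rw [Finset.sum_insert ha]
    have h1 : B ∪ insert a A' = insert a (B ∪ A') := by
      rw [Finset.union_insert]
    have h2 : v (insert a (B ∪ A')) - v (B ∪ A') ≤ v (insert a B) - v B :=
      marg_mono' v hmono hsub Finset.subset_union_left a
    rw [h1]; linarith

/-- prefix bundle: items with index `< k` assigned to `j`. -/
private def Abd {m n : ℕ} (g : Fin m → Fin n) (j : Fin n) (k : ℕ) :
    Finset (Fin m) :=
  Finset.univ.filter (fun y => (y : ℕ) < k ∧ g y = j)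

private lemma Abd_succ_self {m n : ℕ} (g : Fin m → Fin n) (x : Fin m) :
    Abd g (g x) ((x : ℕ) + 1) = insert x (Abd g (g x) (x : ℕ)) := by
  ext y
  simp only [Abd, Finset.mem_filter, Finset.mem_univ, true_and,
    Finset.mem_insert, Nat.lt_succ_iff]
  constructor
  · rintro ⟨hy1, hy2⟩
    rcases lt_or_eq_of_le hy1 with h | h
    · exact Or.inr ⟨h, hy2⟩
    · exact Or.inl (Fin.ext h)
  · rintro (rfl | ⟨hy1, hy2⟩)
    · exact ⟨le_refl _, rfl⟩
    · exact ⟨le_of_lt hy1, hy2⟩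

private lemma Abd_succ_other {m n : ℕ} (g : Fin m → Fin n) (x : Fin m)
    (j : Fin n) (hj : j ≠ g x) :
    Abd g j ((x : ℕ) + 1) = Abd g j (x : ℕ) := by
  ext y
  simp only [Abd, Finset.mem_filter, Finset.mem_univ, true_and, Nat.lt_succ_iff]
  constructor
  · rintro ⟨hy1, hy2⟩
    rcases lt_or_eq_of_le hy1 with h | h
    · exact ⟨h, hy2⟩
    · cases Fin.ext h; exact absurd hy2.symm hj
  · rintro ⟨hy1, hy2⟩
    exact ⟨le_of_lt hy1, hy2⟩

private lemma telescope {m n : ℕ} (v : Fin n → Finset (Fin m) → ℝ)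
    (h0 : ∀ j, v j ∅ = 0) (g : Fin m → Fin n) :
    ∑ j, v j (Abd g j m) =
      ∑ x : Fin m, (v (g x) (Abd g (g x) ((x : ℕ) + 1))
        - v (g x) (Abd g (g x) (x : ℕ))) := by
  have hpoint : ∀ x : Fin m,
      v (g x) (Abd g (g x) ((x : ℕ) + 1)) - v (g x) (Abd g (g x) (x : ℕ))
        = (∑ j, v j (Abd g j ((x : ℕ) + 1))) - ∑ j, v j (Abd g j (x : ℕ)) := by
    intro x
    rw [← Finset.sum_sub_distrib, Finset.sum_eq_single (g x)]
    · intro j _ hj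
      rw [Abd_succ_other g x j hj, sub_self]
    · intro h
      exact absurd (Finset.mem_univ (g x)) h
  have h00 : ∀ j, Abd g j 0 = ∅ := by
    intro j; ext y; simp [Abd]
  calc ∑ j, v j (Abd g j m)
      = (∑ j, v j (Abd g j m)) - ∑ j, v j (Abd g j 0) := by
        simp [h00, h0]
    _ = ∑ k ∈ Finset.range m, ((∑ j, v j (Abd g j (k + 1)))
          - ∑ j, v j (Abd g j k)) :=
        (Finset.sum_range_sub (fun k => ∑ j, v j (Abd g j k)) m).symm
    _ = ∑ x : Fin m, (v (g x) (Abd g (g x) ((x : ℕ) + 1))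
          - v (g x) (Abd g (g x) (x : ℕ))) := by
        rw [← Fin.sum_univ_eq_sum_range
          (fun k => (∑ j, v j (Abd g j (k + 1))) - ∑ j, v j (Abd g j k)) m]
        exact Finset.sum_congr rfl fun x _ => (hpoint x).symm

/-- the greedy algorithm, which processes the items of
`X = Fin m` in increasing order and gives each item `x` to a bidder `g x`
whose current marginal value for `x` is largest, produces an allocation
whose total value is at least half the optimum, when all valuations are
submodular.  Here `prev j x` is the set of items assigned to bidder `j`
before item `x` is processed, and `S j` is bidder `j`'s final bundle. -/
theorem greedy_two_approx_submodular
    {m n : ℕ} (v : Fin n → Finset (Fin m) → ℝ)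
    (h0 : ∀ j, v j ∅ = 0)
    (hmono : ∀ j, ∀ A B : Finset (Fin m), A ⊆ B → v j A ≤ v j B)
    (hnn : ∀ j, ∀ A : Finset (Fin m), 0 ≤ v j A)
    (hsub : ∀ j, ∀ A B : Finset (Fin m),
      v j (A ∪ B) + v j (A ∩ B) ≤ v j A + v j B)
    (g : Fin m → Fin n)
    (prev : Fin n → Fin m → Finset (Fin m))
    (hprev : ∀ j x, prev j x = Finset.univ.filter (fun y => y < x ∧ g y = j))
    (hgreedy : ∀ (x : Fin m) (j : Fin n),
      v j (insert x (prev j x)) - v j (prev j x) ≤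
        v (g x) (insert x (prev (g x) x)) - v (g x) (prev (g x) x))
    (S : Fin n → Finset (Fin m))
    (hS : ∀ j, S j = Finset.univ.filter (fun y => g y = j)) :
    ∀ T : Fin n → Finset (Fin m),
      (∀ i j, i ≠ j → Disjoint (T i) (T j)) →
      Finset.univ.biUnion T = Finset.univ →
      ∑ j, v j (T j) ≤ 2 * ∑ j, v j (S j) := by
  intro T hdisj hcover
  have hAprev : ∀ (j : Fin n) (x : Fin m), Abd g j (x : ℕ) = prev j x := by
    intro j x
    rw [hprev]
    ext y
    simp only [Abd, Finset.mem_filter, Finset.mem_univ, true_and, Fin.lt_def]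
  have hAm : ∀ j, Abd g j m = S j := by
    intro j
    rw [hS]
    ext y
    simp [Abd, y.isLt]
  have htel : ∑ j, v j (S j) =
      ∑ x : Fin m, (v (g x) (insert x (prev (g x) x))
        - v (g x) (prev (g x) x)) := by
    have := telescope v h0 g
    simp only [hAm] at this
    rw [this]
    refine Finset.sum_congr rfl fun x _ => ?_
    rw [Abd_succ_self g x, hAprev]
  have hper : ∀ j, v j (T j) ≤ v j (S j) +
      ∑ x ∈ T j, (v (g x) (insert x (prev (g x) x)) - v (g x) (prev (g x) x)) := by
    intro j
    have h1 : v j (T j) ≤ v j (S j ∪ T j) :=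
      hmono j _ _ Finset.subset_union_right
    have h2 : v j (S j ∪ T j) ≤
        v j (S j) + ∑ x ∈ T j, (v j (insert x (S j)) - v j (S j)) :=
      sum_marg' (v j) (hmono j) (hsub j) (S j) (T j)
    have h3 : ∑ x ∈ T j, (v j (insert x (S j)) - v j (S j)) ≤
        ∑ x ∈ T j, (v (g x) (insert x (prev (g x) x)) - v (g x) (prev (g x) x)) := by
      apply Finset.sum_le_sum
      intro x _
      have hsubset : prev j x ⊆ S j := by
        rw [hprev, hS]
        intro y hy
        simp only [Finset.mem_filter] at hy ⊢
        exact ⟨hy.1, hy.2.2⟩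
      calc v j (insert x (S j)) - v j (S j)
          ≤ v j (insert x (prev j x)) - v j (prev j x) :=
            marg_mono' (v j) (hmono j) (hsub j) hsubset x
        _ ≤ _ := hgreedy x j
    linarith
  have hpart : ∑ j, ∑ x ∈ T j,
      (v (g x) (insert x (prev (g x) x)) - v (g x) (prev (g x) x)) =
      ∑ x : Fin m, (v (g x) (insert x (prev (g x) x)) - v (g x) (prev (g x) x)) := by
    rw [← Finset.sum_biUnion (fun i _ j _ hij => hdisj i j hij), hcover]
  calc ∑ j, v j (T j)
      ≤ ∑ j, (v j (S j) + ∑ x ∈ T j,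
          (v (g x) (insert x (prev (g x) x)) - v (g x) (prev (g x) x))) :=
        Finset.sum_le_sum fun j _ => hper j
    _ = ∑ j, v j (S j) + ∑ j, ∑ x ∈ T j,
          (v (g x) (insert x (prev (g x) x)) - v (g x) (prev (g x) x)) :=
        Finset.sum_add_distrib
    _ = ∑ j, v j (S j) + ∑ j, v j (S j) := by rw [hpart, ← htel]
    _ = 2 * ∑ j, v j (S j) := by ring
end

section
/- Equivalent characterizations of a-submodularity: for a real number a ≥ 1, a valuation v satisfies a·v(x|S) ≥ v(x|T) for all x ∉ T and S ⊆ T (where v(x|S) = v(S∪{x})−v(S)) if and only if v(A) + a·v(B) ≥ v(A∪B) + a·v(A∩B) for all sets A, B with A∩B ⊆ A (i.e., for all A,B). -/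
/-- equivalent characterizations of `a`-submodularity, for
`a ≥ 1`: `a·v(x|S) ≥ v(x|T)` for all `S ⊆ T`, `x ∉ T` iff
`v(A) + a·v(B) ≥ v(A∪B) + a·v(A∩B)` for all `A, B`. -/
theorem aSubmodular_characterizations
    {X : Type*} [DecidableEq X] [Fintype X]
    (a : ℝ) (ha : 1 ≤ a)
    (v : Finset X → ℝ)
    (h0 : v ∅ = 0)
    (hmono : ∀ A B : Finset X, A ⊆ B → v A ≤ v B)
    (hnn : ∀ A : Finset X, 0 ≤ v A) :
    (∀ (S T : Finset X) (x : X), S ⊆ T → x ∉ T →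
      v (insert x T) - v T ≤ a * (v (insert x S) - v S)) ↔
    (∀ A B : Finset X, v (A ∪ B) + a * v (A ∩ B) ≤ v A + a * v B) := by
  constructor
  · intro h
    have key : ∀ (D S T : Finset X), S ⊆ T → Disjoint D T →
        v (T ∪ D) - v T ≤ a * (v (S ∪ D) - v S) := by
      intro D
      induction D using Finset.induction_on with
      | empty => intro S T _ _; simp
      | insert x D' hx ih =>
        intro S T hST hdisj
        have hdisj' : Disjoint D' T := (Finset.disjoint_insert_left.mp hdisj).2
        have hxT : x ∉ T := (Finset.disjoint_insert_left.mp hdisj).1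
        have hxTD : x ∉ T ∪ D' := by
          simp [hxT, hx]
        have h1 : v (insert x (T ∪ D')) - v (T ∪ D') ≤
            a * (v (insert x (S ∪ D')) - v (S ∪ D')) :=
          h (S ∪ D') (T ∪ D') x (Finset.union_subset_union_left hST) hxTD
        have h2 : v (T ∪ D') - v T ≤ a * (v (S ∪ D') - v S) := ih S T hST hdisj'
        have e1 : T ∪ insert x D' = insert x (T ∪ D') := by
          ext y; simp [or_comm, or_left_comm]
        have e2 : S ∪ insert x D' = insert x (S ∪ D') := by
          ext y; simp [or_comm, or_left_comm]
        rw [e1, e2]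
        linarith
    intro A B
    have hS : A ∩ B ⊆ A := Finset.inter_subset_left
    have hD : Disjoint (B \ A) A := Finset.sdiff_disjoint
    have := key (B \ A) (A ∩ B) A hS hD
    have e1 : A ∪ B \ A = A ∪ B := Finset.union_sdiff_self_eq_union
    have e2 : A ∩ B ∪ B \ A = B := by
      ext y; simp; tauto
    rw [e1, e2] at this
    linarith
  · intro h S T x hST hxT
    have := h T (insert x S)
    have e1 : T ∪ insert x S = insert x T := by
      ext y; simp [or_comm, or_left_comm]; tauto
    have e2 : T ∩ insert x S = S := by
      ext y
      simp only [Finset.mem_inter, Finset.mem_insert]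
      constructor
      · rintro ⟨hyT, rfl | hyS⟩
        · exact absurd hyT hxT
        · exact hyS
      · exact fun hy => ⟨hST hy, Or.inr hy⟩
    rw [e1, e2] at this
    linarith
end

section
/- Greedy (1+a)-approximation for a-submodular valuations: if all valuations v₁,…,vₙ are a-submodular for some a ≥ 1 (i.e., a·vⱼ(x|S) ≥ vⱼ(x|T) for all S ⊆ T, x ∉ T), then the greedy algorithm assigning each item, in order, to the bidder with the largest current marginal value yields an allocation whose total value is at least 1/(1+a) times the optimum Σⱼ vⱼ(Tⱼ) over all partitions (T₁,…,Tₙ). -/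
open Finset

lemma telescope_aux {m : ℕ} (v : Finset (Fin m) → ℝ) (h0 : v ∅ = 0) :
    ∀ A : Finset (Fin m),
      v A = ∑ x ∈ A, (v (insert x (A.filter (fun y => y < x))) - v (A.filter (fun y => y < x))) := by
  intro A
  induction A using Finset.strongInduction with
  | _ A ih =>
    rcases A.eq_empty_or_nonempty with rfl | hne
    · simp [h0]
    · set x := A.max' hne with hx
      have hxA : x ∈ A := A.max'_mem hne
      have herase : A.filter (fun y => y < x) = A.erase x := by
        ext z
        simp only [mem_filter, mem_erase]
        constructor
        · rintro ⟨hz, hlt⟩; exact ⟨ne_of_lt hlt, hz⟩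
        · rintro ⟨hne', hz⟩
          exact ⟨hz, lt_of_le_of_ne (A.le_max' z hz) hne'⟩
      have hsub : A.erase x ⊂ A := erase_ssubset hxA
      have hins : insert x (A.erase x) = A := insert_erase hxA
      have hsplit := Finset.add_sum_erase A
        (fun y => v (insert y (A.filter (fun z => z < y))) - v (A.filter (fun z => z < y))) hxA
      rw [← hsplit]; rw [herase, hins]
      have hcong : ∀ y ∈ A.erase x,
          v (insert y (A.filter (fun z => z < y))) - v (A.filter (fun z => z < y))
          = v (insert y ((A.erase x).filter (fun z => z < y))) - v ((A.erase x).filter (fun z => z < y)) := by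
        intro y hy
        have heq : A.filter (fun z => z < y) = (A.erase x).filter (fun z => z < y) := by
          ext z
          simp only [mem_filter, mem_erase]
          constructor
          · rintro ⟨hz, hlt⟩
            have hyx : y < x := lt_of_le_of_ne (A.le_max' y (mem_of_mem_erase hy)) (ne_of_mem_erase hy)
            exact ⟨⟨ne_of_lt (hlt.trans hyx), hz⟩, hlt⟩
          · rintro ⟨⟨_, hz⟩, hlt⟩; exact ⟨hz, hlt⟩
        rw [heq]
      rw [Finset.sum_congr rfl hcong, ← ih _ hsub]
      ring
/-- if all valuations are `a`-submodular for some `a ≥ 1`, then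
the greedy algorithm (processing the items of `X = Fin m` in increasing order
and giving each item to a bidder with the largest current marginal value)
produces an allocation whose total value is at least `1/(1+a)` times the
optimum. `prev j x` is the set of items assigned to bidder `j` before item `x`
is processed and `S j` is bidder `j`'s final bundle. -/
theorem greedy_one_plus_a_approx_aSubmodular
    {m n : ℕ} (a : ℝ) (ha : 1 ≤ a)
    (v : Fin n → Finset (Fin m) → ℝ)
    (h0 : ∀ j, v j ∅ = 0)
    (hmono : ∀ j, ∀ A B : Finset (Fin m), A ⊆ B → v j A ≤ v j B)
    (hnn : ∀ j, ∀ A : Finset (Fin m), 0 ≤ v j A)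
    (hasub : ∀ j, ∀ (S T : Finset (Fin m)) (x : Fin m), S ⊆ T → x ∉ T →
      v j (insert x T) - v j T ≤ a * (v j (insert x S) - v j S))
    (g : Fin m → Fin n)
    (prev : Fin n → Fin m → Finset (Fin m))
    (hprev : ∀ j x, prev j x = Finset.univ.filter (fun y => y < x ∧ g y = j))
    (hgreedy : ∀ (x : Fin m) (j : Fin n),
      v j (insert x (prev j x)) - v j (prev j x) ≤
        v (g x) (insert x (prev (g x) x)) - v (g x) (prev (g x) x))
    (S : Fin n → Finset (Fin m))
    (hS : ∀ j, S j = Finset.univ.filter (fun y => g y = j)) :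
    ∀ T : Fin n → Finset (Fin m),
      (∀ i j, i ≠ j → Disjoint (T i) (T j)) →
      Finset.univ.biUnion T = Finset.univ →
      ∑ j, v j (T j) ≤ (1 + a) * ∑ j, v j (S j) := by
  intro T hdisj _
  set w : Fin m → ℝ :=
    fun x => v (g x) (insert x (prev (g x) x)) - v (g x) (prev (g x) x) with hw
  set w' : Fin n → Fin m → ℝ :=
    fun j x => v j (insert x (prev j x)) - v j (prev j x) with hw'
  have hprevS : ∀ j x, prev j x = (S j).filter (fun y => y < x) := by
    intro j x
    rw [hprev, hS, Finset.filter_filter]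
    exact Finset.filter_congr (by intro y _; tauto)
  have hprevsub : ∀ j x, prev j x ⊆ S j := by
    intro j x; rw [hprevS]; exact Finset.filter_subset _ _
  have hwnn : ∀ x, 0 ≤ w x := by
    intro x
    have := hmono (g x) (prev (g x) x) (insert x (prev (g x) x)) (Finset.subset_insert _ _)
    simpa [hw] using sub_nonneg.mpr this
  -- telescoping: v j (S j) = ∑ x ∈ S j, w' j x
  have htel : ∀ j, v j (S j) = ∑ x ∈ S j, w' j x := by
    intro j
    have := telescope_aux (v j) (h0 j) (S j)
    rw [this]
    refine Finset.sum_congr rfl (fun x _ => ?_)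
    show _ = v j (insert x (prev j x)) - v j (prev j x)
    rw [hprevS]
  -- w' j x = w x for x ∈ S j
  have hwS : ∀ j, ∀ x ∈ S j, w' j x = w x := by
    intro j x hx
    have hgx : g x = j := by
      rw [hS] at hx; exact (Finset.mem_filter.mp hx).2
    simp [hw, hw', hgx]
  -- key induction bound
  have key : ∀ j, ∀ B : Finset (Fin m), Disjoint B (S j) →
      v j (B ∪ S j) ≤ v j (S j) + a * ∑ x ∈ B, w' j x := by
    intro j B
    induction B using Finset.induction_on with
    | empty => intro _; simp
    | @insert x B hx ih =>
      intro hd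
      have hdB : Disjoint B (S j) := (Finset.disjoint_insert_left.mp hd).2
      have hxS : x ∉ S j := (Finset.disjoint_insert_left.mp hd).1
      have hxBS : x ∉ B ∪ S j := by simp [hx, hxS]
      have hstep : v j (insert x (B ∪ S j)) - v j (B ∪ S j) ≤ a * w' j x :=
        hasub j (prev j x) (B ∪ S j) x
          ((hprevsub j x).trans Finset.subset_union_right) hxBS
      have : insert x B ∪ S j = insert x (B ∪ S j) := by
        rw [Finset.insert_union]
      rw [this, Finset.sum_insert hx]
      have := ih hdB
      linarith
  -- per-bidder bound
  have hper : ∀ j, v j (T j) ≤ v j (S j) + a * ∑ x ∈ T j \ S j, w x := by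
    intro j
    have h1 : v j (T j) ≤ v j ((T j \ S j) ∪ S j) :=
      hmono j _ _ (by intro z hz; by_cases h : z ∈ S j <;> simp [Finset.mem_union, Finset.mem_sdiff, hz, h])
    have h2 := key j (T j \ S j) Finset.sdiff_disjoint
    have h3 : ∑ x ∈ T j \ S j, w' j x ≤ ∑ x ∈ T j \ S j, w x :=
      Finset.sum_le_sum (fun x _ => hgreedy x j)
    nlinarith [ha]
  -- sum over j
  have hsum1 : ∑ j, v j (T j) ≤ ∑ j, v j (S j) + a * ∑ j, ∑ x ∈ T j \ S j, w x := by
    calc ∑ j, v j (T j) ≤ ∑ j, (v j (S j) + a * ∑ x ∈ T j \ S j, w x) :=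
          Finset.sum_le_sum (fun j _ => hper j)
      _ = ∑ j, v j (S j) + a * ∑ j, ∑ x ∈ T j \ S j, w x := by
          rw [Finset.sum_add_distrib, Finset.mul_sum]
  have hdisj2 : ∀ i ∈ (Finset.univ : Finset (Fin n)), ∀ j ∈ (Finset.univ : Finset (Fin n)),
      i ≠ j → Disjoint (T i \ S i) (T j \ S j) := by
    intro i _ j _ hij
    exact ((hdisj i j hij).mono (Finset.sdiff_subset) (Finset.sdiff_subset))
  have hsum2 : ∑ j, ∑ x ∈ T j \ S j, w x ≤ ∑ x, w x := by
    rw [← Finset.sum_biUnion hdisj2]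
    exact Finset.sum_le_sum_of_subset_of_nonneg (Finset.subset_univ _)
      (fun x _ _ => hwnn x)
  have hsum3 : ∑ x, w x = ∑ j, v j (S j) := by
    rw [← Finset.sum_fiberwise Finset.univ g w]
    refine Finset.sum_congr rfl (fun j _ => ?_)
    rw [htel j]
    refine Finset.sum_congr (by rw [hS]) (fun x hx => ?_)
    exact (hwS j x hx).symm
  have hannn : 0 ≤ a := le_trans zero_le_one ha
  nlinarith [mul_le_mul_of_nonneg_left hsum2 hannn]
end
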